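/- The plane curve C₂₀ defined by Z²⁰ + F₂₀(X,Y) = 0 is smooth: there is no nonzero vector (x,y,z) ∈ ℂ³ at which all three partial derivatives of the polynomial Z²⁰ + F₂₀(X,Y) vanish simultaneously. -/
import Mathlib


noncomputable section
open MvPolynomial

/-- `G = Z²⁰ + F₂₀(X, Y)` with `X = X 0`, `Y = X 1`, `Z = X 2`. -/
def G20 : MvPolynomial (Fin 3) ℂ :=
  X 2 ^ 20 +
    (X 0 ^ 20 - 228 * (X 0 ^ 15 * X 1 ^ 5 - X 0 ^ 5 * X 1 ^ 15)
      + 494 * X 0 ^ 10 * X 1 ^ 10 + X 1 ^ 20)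

lemma pd228 (i : Fin 3) : pderiv i (228 : MvPolynomial (Fin 3) ℂ) = 0 := by
  rw [← map_ofNat (C : ℂ →+* MvPolynomial (Fin 3) ℂ) 228, pderiv_C]
lemma pd494 (i : Fin 3) : pderiv i (494 : MvPolynomial (Fin 3) ℂ) = 0 := by
  rw [← map_ofNat (C : ℂ →+* MvPolynomial (Fin 3) ℂ) 494, pderiv_C]

theorem stmt4 :
    ¬ ∃ v : Fin 3 → ℂ, v ≠ 0 ∧ ∀ i : Fin 3, eval v (pderiv i G20) = 0 := by
  rintro ⟨v, hv, h⟩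
  have h0 := h 0
  have h1 := h 1
  have h2 := h 2
  simp [G20, pderiv_X, pderiv_pow, Pi.single_apply, pd228, pd494] at h0 h1 h2
  set x := v 0; set y := v 1; set z := v 2
  -- z = 0
  have hz : z = 0 := h2
  -- F(x,y) = 0 by Euler
  have hF : x ^ 20 - 228 * (x ^ 15 * y ^ 5 - x ^ 5 * y ^ 15)
      + 494 * x ^ 10 * y ^ 10 + y ^ 20 = 0 := by
    linear_combination (x / 20) * h0 + (y / 20) * h1
  have hx : x = 0 := by
    by_contra hx
    -- from h0 : 20 x^4 (x^15 - 171 x^10 y^5 + 247 x^5 y^10 + 57 y^15) = 0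
    have hQ : x ^ 15 - 171 * x ^ 10 * y ^ 5 + 247 * x ^ 5 * y ^ 10 + 57 * y ^ 15 = 0 := by
      have h4 : x ^ 4 ≠ 0 := pow_ne_zero _ hx
      have : x ^ 4 * (20 * (x ^ 15 - 171 * x ^ 10 * y ^ 5 + 247 * x ^ 5 * y ^ 10 + 57 * y ^ 15)) = 0 := by
        linear_combination h0
      rcases mul_eq_zero.mp this with h' | h'
      · exact absurd h' h4
      · linear_combination h' / 20
    -- Bezout certificate in a = x^5, b = y^5 forces y = 0
    have hy : y = 0 := by
      have hb : y ^ 30 = 0 := by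
        linear_combination
          ((-(133:ℂ) * x ^ 10 + 22762 * x ^ 5 * y ^ 5 - 36117 * y ^ 10) / 937500) * hF +
          ((133 * x ^ 15 - 30343 * x ^ 10 * y ^ 5 + 70051 * x ^ 5 * y ^ 10 + 17081 * y ^ 15) / 937500) * hQ
      exact pow_eq_zero_iff (by norm_num) |>.mp hb
    -- then h0 gives x = 0, contradiction
    apply hx
    have : x ^ 19 = 0 := by
      rw [hy] at h0; linear_combination h0 / 20
    exact pow_eq_zero_iff (by norm_num) |>.mp this
  have hy : y = 0 := by
    have : y ^ 19 = 0 := by rw [hx] at h1; linear_combination h1 / 20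
    exact pow_eq_zero_iff (by norm_num) |>.mp this
  apply hv
  funext i
  fin_cases i <;> assumption
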